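/- Let (X, Y) be a random vector with X valued in ℕ and with dom ψ_Y = ℝ. For u ∈ ℝ let X̂_u be the nonnegative integer-valued random variable with law P(X̂_u = k) = exp(−ψ_Y(u)) E[exp(uY) 1_{X=k}], k ∈ ℕ. Then for all real x and y: sup_{u∈ℝ} [ u y + ψ*_{X̂_u}(x) − ψ_Y(u) ] = ψ*_{X,Y}(x, y), where ψ*_{X,Y}(x,y) = sup_{(ξ,u)∈ℝ²} [ ξ x + u y − ψ_{X,Y}(ξ, u) ] and ψ*_{X̂_u}(x) = sup_{ξ∈ℝ} [ ξ x − ψ_{X̂_u}(ξ) ]. -/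

import Mathlib

open MeasureTheory ProbabilityTheory Real Filter Topology Set
open scoped ENNReal NNReal

variable {Ω : Type*} [MeasurableSpace Ω]

/-- cumulant generating function -/
noncomputable def psi (μ : Measure Ω) (Z : Ω → ℝ) (t : ℝ) : ℝ :=
  Real.log (∫ ω, Real.exp (t * Z ω) ∂μ)

/-- effective domain of the cgf -/
def psiDom (μ : Measure Ω) (Z : Ω → ℝ) : Set ℝ :=
  {t | Integrable (fun ω => Real.exp (t * Z ω)) μ}

/-- Fenchel-Legendre transform of the cgf (with `ψ = +∞` outside its domain). -/
noncomputable def psiStar (μ : Measure Ω) (Z : Ω → ℝ) (x : ℝ) : EReal :=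
  ⨆ t ∈ psiDom μ Z, ((t * x - psi μ Z t : ℝ) : EReal)

/-- joint cgf of a pair -/
noncomputable def psi2 (μ : Measure Ω) (Z W : Ω → ℝ) (v : ℝ × ℝ) : ℝ :=
  Real.log (∫ ω, Real.exp (v.1 * Z ω + v.2 * W ω) ∂μ)

def psi2Dom (μ : Measure Ω) (Z W : Ω → ℝ) : Set (ℝ × ℝ) :=
  {v | Integrable (fun ω => Real.exp (v.1 * Z ω + v.2 * W ω)) μ}

noncomputable def psi2Star (μ : Measure Ω) (Z W : Ω → ℝ) (x y : ℝ) : EReal :=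
  ⨆ v ∈ psi2Dom μ Z W, ((v.1 * x + v.2 * y - psi2 μ Z W v : ℝ) : EReal)

/-- the set `R_Z`: interior of the range of `ψ'_Z`. -/
def RSet (μ : Measure Ω) (Z : Ω → ℝ) : Set ℝ :=
  interior {x | ∃ t ∈ interior (psiDom μ Z), HasDerivAt (psi μ Z) x t}

/-- support of the law of an ℕ-valued random variable -/
def nsupport (μ : Measure Ω) (Z : Ω → ℕ) : Set ℕ := {k | μ {ω | Z ω = k} ≠ 0}

/-- span of an ℕ-valued random variable -/
noncomputable def span (μ : Measure Ω) (Z : Ω → ℕ) : ℕ :=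
  sSup {m : ℕ | ∃ b : ℕ, nsupport μ Z ⊆ {k | ∃ j : ℕ, k = m * j + b}}

/-- essential smoothness of a function `f` with effective domain `D` -/
def EssSmooth (f : ℝ × ℝ → ℝ) (D : Set (ℝ × ℝ)) : Prop :=
  (interior D).Nonempty ∧ (∀ v ∈ interior D, DifferentiableAt ℝ f v) ∧
    ∀ c ∈ frontier D, Tendsto (fun v => ‖fderiv ℝ f v‖) (𝓝[interior D] c) atTop

/-- Large deviation principle for a sequence of laws on ℝ with speed `a` and rate `I`. -/
def HasLDP (R : ℕ → Measure ℝ) (a : ℕ → ℝ) (I : ℝ → EReal) : Prop :=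
  LowerSemicontinuous I ∧ (∀ x, 0 ≤ I x) ∧
    ∀ A : Set ℝ,
      -(⨅ x ∈ interior A, I x) ≤
          liminf (fun n => (a n : EReal) * ENNReal.log (R n A)) atTop ∧
        limsup (fun n => (a n : EReal) * ENNReal.log (R n A)) atTop ≤
          -(⨅ x ∈ closure A, I x)

/-- a good rate function has compact sublevel sets -/
def GoodRate (I : ℝ → EReal) : Prop := ∀ c : ℝ, IsCompact {x | I x ≤ (c : EReal)}

/-- tilted measure: the law of `(X̌_ξ, Y̌_ξ)` is that of `(X,Y)` under `tilt μ X ξ`. -/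
noncomputable def tilt (μ : Measure Ω) (X : Ω → ℕ) (ξ : ℝ) : Measure Ω :=
  μ.withDensity fun ω => ENNReal.ofReal (Real.exp (ξ * X ω - psi μ (fun ω' => (X ω' : ℝ)) ξ))

noncomputable def covar (ν : Measure Ω) (f g : Ω → ℝ) : ℝ :=
  ∫ ω, (f ω - ∫ x, f x ∂ν) * (g ω - ∫ x, g x ∂ν) ∂ν

/-- `α²_ξ`: variance of the residual of the linear regression of `Y̌_ξ` on `X̌_ξ`. -/
noncomputable def alpha2 (μ : Measure Ω) (X : Ω → ℕ) (Y : Ω → ℝ) (ξ : ℝ) : ℝ :=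
  variance
    (fun ω => (Y ω - ∫ x, Y x ∂(tilt μ X ξ)) -
      covar (tilt μ X ξ) (fun ω' => (X ω' : ℝ)) Y / variance (fun ω' => (X ω' : ℝ)) (tilt μ X ξ) *
        ((X ω : ℝ) - ∫ x, (X x : ℝ) ∂(tilt μ X ξ)))
    (tilt μ X ξ)

/-- tilt of the measure by `exp(u W − ψ_W(u))`; the law of `X` under `tiltR μ Y u` is the law of
the variable `X̂_u`, i.e. `P(X̂_u = k) = exp(−ψ_Y(u)) E[exp(uY) 1_{X=k}]`. -/
noncomputable def tiltR {Ω : Type*} [MeasurableSpace Ω] (μ : Measure Ω) (W : Ω → ℝ) (u : ℝ) :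
    Measure Ω :=
  μ.withDensity fun ω => ENNReal.ofReal (Real.exp (u * W ω - psi μ W u))


section AuxLemmas

lemma ereal_add_iSup' {ι : Sort*} (r : ℝ) (f : ι → EReal) :
    (r : EReal) + ⨆ i, f i = ⨆ i, ((r : EReal) + f i) := by
  refine le_antisymm ?_ (iSup_le fun i => add_le_add le_rfl (le_iSup f i))
  rw [add_comm, ← EReal.le_sub_iff_add_le (Or.inl (EReal.coe_ne_bot r))
    (Or.inl (EReal.coe_ne_top r))]
  refine iSup_le fun i => ?_
  rw [EReal.le_sub_iff_add_le (Or.inl (EReal.coe_ne_bot r)) (Or.inl (EReal.coe_ne_top r)),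
    add_comm]
  exact le_iSup (fun j => (r : EReal) + f j) i

lemma ereal_iSup_sub' {ι : Sort*} (r : ℝ) (f : ι → EReal) :
    (⨆ i, f i) - (r : EReal) = ⨆ i, (f i - (r : EReal)) := by
  have h := ereal_add_iSup' (ι := ι) (-r) f
  simp only [EReal.coe_neg] at h
  calc (⨆ i, f i) - (r : EReal) = -(r : EReal) + ⨆ i, f i := by
        rw [sub_eq_add_neg, add_comm]
    _ = ⨆ i, (-(r : EReal) + f i) := h
    _ = ⨆ i, (f i - (r : EReal)) := by
        refine iSup_congr fun i => ?_
        rw [sub_eq_add_neg, add_comm]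

lemma tiltR_integral (μ : Measure Ω) {W : Ω → ℝ} (hW : Measurable W) (u : ℝ) (g : Ω → ℝ) :
    ∫ ω, g ω ∂(tiltR μ W u) = ∫ ω, Real.exp (u * W ω - psi μ W u) * g ω ∂μ := by
  have hmeas : Measurable fun ω => Real.toNNReal (Real.exp (u * W ω - psi μ W u)) :=
    (((hW.const_mul u).sub_const _).exp).real_toNNReal
  rw [show tiltR μ W u = μ.withDensity fun ω =>
      ((Real.toNNReal (Real.exp (u * W ω - psi μ W u)) : ℝ≥0) : ℝ≥0∞) from rfl,
    integral_withDensity_eq_integral_smul hmeas]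
  refine integral_congr_ae (Filter.Eventually.of_forall fun ω => ?_)
  simp [NNReal.smul_def, Real.coe_toNNReal _ (Real.exp_nonneg _)]

lemma tiltR_integrable_iff (μ : Measure Ω) {W : Ω → ℝ} (hW : Measurable W) (u : ℝ)
    (g : Ω → ℝ) :
    Integrable g (tiltR μ W u) ↔
      Integrable (fun ω => Real.exp (u * W ω - psi μ W u) * g ω) μ := by
  have hmeas : Measurable fun ω => Real.toNNReal (Real.exp (u * W ω - psi μ W u)) :=
    (((hW.const_mul u).sub_const _).exp).real_toNNReal
  rw [show tiltR μ W u = μ.withDensity fun ω =>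
      ((Real.toNNReal (Real.exp (u * W ω - psi μ W u)) : ℝ≥0) : ℝ≥0∞) from rfl,
    integrable_withDensity_iff_integrable_smul hmeas]
  simp [NNReal.smul_def, Real.coe_toNNReal _ (Real.exp_nonneg _)]

end AuxLemmas

/-- **Convex duality identity** (Equation (14)):
`sup_u [uy + ψ*_{X̂_u}(x) − ψ_Y(u)] = ψ*_{X,Y}(x, y)`. -/
theorem legendre_duality_identity
    {Ω : Type*} [MeasurableSpace Ω] (μ : Measure Ω) [IsProbabilityMeasure μ]
    (X : Ω → ℕ) (Y : Ω → ℝ) (hX : Measurable X) (hY : Measurable Y)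
    (hdomY : psiDom μ Y = Set.univ) :
    ∀ x y : ℝ,
      (⨆ u : ℝ, (((u * y : ℝ) : EReal) +
          psiStar (tiltR μ Y u) (fun ω => (X ω : ℝ)) x - ((psi μ Y u : ℝ) : EReal))) =
        psi2Star μ (fun ω => (X ω : ℝ)) Y x y := by
  intro x y
  set X' : Ω → ℝ := fun ω => (X ω : ℝ) with hX'def
  have hdom : ∀ u ξ : ℝ, ξ ∈ psiDom (tiltR μ Y u) X' ↔ (ξ, u) ∈ psi2Dom μ X' Y := by
    intro u ξ
    rw [psiDom, Set.mem_setOf_eq, tiltR_integrable_iff μ hY u]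
    have heq : (fun ω => Real.exp (u * Y ω - psi μ Y u) * Real.exp (ξ * X' ω))
        = fun ω => Real.exp (- psi μ Y u) * Real.exp (ξ * X' ω + u * Y ω) := by
      funext ω; rw [← Real.exp_add, ← Real.exp_add]; ring_nf
    rw [heq, psi2Dom, Set.mem_setOf_eq]
    exact integrable_const_mul_iff (isUnit_iff_ne_zero.2 (Real.exp_ne_zero _)) _
  have hval : ∀ u ξ : ℝ, (ξ, u) ∈ psi2Dom μ X' Y →
      psi (tiltR μ Y u) X' ξ = psi2 μ X' Y (ξ, u) - psi μ Y u := by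
    intro u ξ hmem
    have hmem' : Integrable (fun ω => Real.exp (ξ * X' ω + u * Y ω)) μ := hmem
    have hpos : 0 < ∫ ω, Real.exp (ξ * X' ω + u * Y ω) ∂μ := integral_exp_pos hmem'
    have h2 : psi2 μ X' Y (ξ, u) = Real.log (∫ ω, Real.exp (ξ * X' ω + u * Y ω) ∂μ) := rfl
    have heq : (fun ω => Real.exp (u * Y ω - psi μ Y u) * Real.exp (ξ * X' ω))
        = fun ω => Real.exp (- psi μ Y u) * Real.exp (ξ * X' ω + u * Y ω) := by
      funext ω; rw [← Real.exp_add, ← Real.exp_add]; ring_nf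
    rw [psi, tiltR_integral μ hY u, heq, integral_const_mul,
      Real.log_mul (Real.exp_ne_zero _) hpos.ne', Real.log_exp, h2]
    ring
  have hterm : ∀ u : ℝ,
      ((u * y : ℝ) : EReal) + psiStar (tiltR μ Y u) X' x - ((psi μ Y u : ℝ) : EReal)
        = ⨆ ξ : ℝ, ⨆ _ : (ξ, u) ∈ psi2Dom μ X' Y,
            ((ξ * x + u * y - psi2 μ X' Y (ξ, u) : ℝ) : EReal) := by
    intro u
    simp only [psiStar]
    rw [ereal_add_iSup', ereal_iSup_sub']
    refine iSup_congr fun ξ => ?_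
    rw [ereal_add_iSup', ereal_iSup_sub']
    refine iSup_congr_Prop (hdom u ξ) fun h => ?_
    rw [hval u ξ h]
    norm_cast
    ring_nf
  calc (⨆ u : ℝ, (((u * y : ℝ) : EReal) + psiStar (tiltR μ Y u) X' x
          - ((psi μ Y u : ℝ) : EReal)))
      = ⨆ u : ℝ, ⨆ ξ : ℝ, ⨆ _ : (ξ, u) ∈ psi2Dom μ X' Y,
          ((ξ * x + u * y - psi2 μ X' Y (ξ, u) : ℝ) : EReal) := iSup_congr hterm
    _ = ⨆ ξ : ℝ, ⨆ u : ℝ, ⨆ _ : (ξ, u) ∈ psi2Dom μ X' Y,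
          ((ξ * x + u * y - psi2 μ X' Y (ξ, u) : ℝ) : EReal) := iSup_comm
    _ = psi2Star μ X' Y x y := by
        simp only [psi2Star]
        rw [iSup_prod]
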